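/- Let b̃, C̃ ∈ ℝ, let I ⊆ ℝ be a nonempty open interval, and let f : I → ℝ be twice differentiable with f''(u) ≠ 0 for all u ∈ I, satisfying √(1+f'(u)²)·((1+f'(u)²)/f''(u) + f(u) − b̃) = C̃ for all u ∈ I. Then there exists a constant C̃₁ ∈ ℝ such that for all u ∈ I, f(u) = b̃ + (1+f'(u)²)^{−1/2}·(C̃₁ + (C̃/2)·log(1+f'(u)²)). -/

import Mathlib

open Real Set

/-- Lemma 3.1 (first-integral form), case ã = −1. -/
theorem stmt_2 (btil Ctil : ℝ)
    (a b : ℝ) (hab : a < b) (f : ℝ → ℝ)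
    (hf1 : ∀ u ∈ Ioo a b, DifferentiableAt ℝ f u)
    (hf2 : ∀ u ∈ Ioo a b, DifferentiableAt ℝ (deriv f) u)
    (hf'' : ∀ u ∈ Ioo a b, deriv (deriv f) u ≠ 0)
    (heq : ∀ u ∈ Ioo a b,
      Real.sqrt (1 + (deriv f u) ^ 2) *
        ((1 + (deriv f u) ^ 2) / deriv (deriv f) u + f u - btil) = Ctil) :
    ∃ C₁ : ℝ, ∀ u ∈ Ioo a b,
      f u = btil + (1 + (deriv f u) ^ 2) ^ (-(1 : ℝ) / 2) *
        (C₁ + (Ctil / 2) * Real.log (1 + (deriv f u) ^ 2)) := by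
  set g : ℝ → ℝ := fun u => (f u - btil) * Real.sqrt (1 + (deriv f u) ^ 2)
      - (Ctil / 2) * Real.log (1 + (deriv f u) ^ 2) with hg
  have key : ∀ u ∈ Ioo a b, HasDerivAt g 0 u := by
    intro u hu
    have hp : HasDerivAt f (deriv f u) u := (hf1 u hu).hasDerivAt
    have hp' : HasDerivAt (deriv f) (deriv (deriv f) u) u := (hf2 u hu).hasDerivAt
    set p := deriv f u with hpdef
    set q := deriv (deriv f) u with hqdef
    have hq : q ≠ 0 := hf'' u hu
    have hpos : (0:ℝ) < 1 + p ^ 2 := by positivity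
    have hS : (0:ℝ) < Real.sqrt (1 + p ^ 2) := Real.sqrt_pos.mpr hpos
    have h1 : HasDerivAt (fun u => 1 + (deriv f u) ^ 2) (2 * p * q) u := by
      have h2 := (hasDerivAt_const u (1:ℝ)).add (hp'.pow 2)
      refine h2.congr_deriv ?_
      push_cast
      rw [hpdef]
      ring
    have hsqrt : HasDerivAt (fun u => Real.sqrt (1 + (deriv f u) ^ 2))
        (2 * p * q / (2 * Real.sqrt (1 + p ^ 2))) u := h1.sqrt (ne_of_gt hpos)
    have hlog : HasDerivAt (fun u => Real.log (1 + (deriv f u) ^ 2))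
        (2 * p * q / (1 + p ^ 2)) u := h1.log (ne_of_gt hpos)
    have hmain : HasDerivAt g (p * Real.sqrt (1 + p ^ 2)
        + (f u - btil) * (2 * p * q / (2 * Real.sqrt (1 + p ^ 2)))
        - Ctil / 2 * (2 * p * q / (1 + p ^ 2))) u :=
      ((hp.sub_const btil).mul hsqrt).sub (hlog.const_mul (Ctil / 2))
    have hC := heq u hu
    have hS2 : Real.sqrt (1 + p ^ 2) ^ 2 = 1 + p ^ 2 := Real.sq_sqrt hpos.le
    have h3 : (1 + p ^ 2) / q + f u - btil = Ctil / Real.sqrt (1 + p ^ 2) := by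
      rw [eq_div_iff hS.ne']
      linear_combination hC
    have hfb : f u - btil = Ctil / Real.sqrt (1 + p ^ 2) - (1 + p ^ 2) / q := by
      linarith
    have hzero : p * Real.sqrt (1 + p ^ 2)
        + (f u - btil) * (2 * p * q / (2 * Real.sqrt (1 + p ^ 2)))
        - Ctil / 2 * (2 * p * q / (1 + p ^ 2)) = 0 := by
      rw [hfb]
      generalize hSd : Real.sqrt (1 + p ^ 2) = S at hS hS2
      rw [← hS2]
      field_simp
      ring
    rwa [hzero] at hmain
  have hdiff : DifferentiableOn ℝ g (Ioo a b) := fun u hu =>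
    (key u hu).differentiableAt.differentiableWithinAt
  have hfd0 : ∀ u ∈ Ioo a b, fderivWithin ℝ g (Ioo a b) u = 0 := by
    intro u hu
    rw [fderivWithin_of_isOpen isOpen_Ioo hu, (key u hu).hasFDerivAt.fderiv]
    ext; simp
  set c := (a + b) / 2 with hc
  have hcmem : c ∈ Ioo a b := by constructor <;> [linarith; linarith]
  refine ⟨g c, fun u hu => ?_⟩
  have hgc : g u = g c :=
    (convex_Ioo a b).is_const_of_fderivWithin_eq_zero hdiff hfd0 hu hcmem
  set p := deriv f u with hpdef
  have hpos : (0:ℝ) < 1 + p ^ 2 := by positivity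
  have hS : (0:ℝ) < Real.sqrt (1 + p ^ 2) := Real.sqrt_pos.mpr hpos
  have hrpow : (1 + p ^ 2) ^ (-(1:ℝ) / 2) = (Real.sqrt (1 + p ^ 2))⁻¹ := by
    rw [neg_div, Real.rpow_neg hpos.le, Real.sqrt_eq_rpow]
  have hgu : (f u - btil) * Real.sqrt (1 + p ^ 2)
      - (Ctil / 2) * Real.log (1 + p ^ 2) = g c := hgc
  rw [hrpow, ← hgu]
  field_simp
  ring
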